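/- arXiv:1801.05993 — 2 statements merged into one kernel-verified Lean document; each statement's English description precedes it below -/
import Mathlib

section
/- Let k₀ > 0, let M ≥ 1, let r₁, …, r_M ∈ ℝ² and c₁, …, c_M ∈ ℂ, and let z ∈ ℝ². Then (1/(2π)) ∫₀^{2π} exp(−i k₀ d(θ)·z) · ( Σ_{m=1}^{M} c_m exp(i k₀ d(θ)·r_m) J₀(k₀ ‖z − r_m‖) ) dθ = Σ_{m=1}^{M} c_m J₀(k₀ ‖z − r_m‖)². In particular, averaging the phase-corrected single-incidence responses over all incident directions replaces each factor J₀(k₀‖z − r_m‖) by its square. -/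
open MeasureTheory Real

/-- Bessel function of the first kind of order zero, defined through its
integral representation `J₀(t) = (1/(2π)) ∫₀^{2π} exp(i t cos θ) dθ`. -/
noncomputable def J₀ (t : ℝ) : ℂ :=
  (1 / (2 * Real.pi) : ℂ) *
    ∫ θ in (0 : ℝ)..(2 * Real.pi), Complex.exp (Complex.I * ((t * Real.cos θ : ℝ) : ℂ))

lemma key_integral (a b : ℝ) :
    ∫ θ in (0:ℝ)..(2*Real.pi),
        Complex.exp (Complex.I * ((a * Real.cos θ + b * Real.sin θ : ℝ) : ℂ))
      = ∫ θ in (0:ℝ)..(2*Real.pi),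
        Complex.exp (Complex.I * ((Real.sqrt (a^2+b^2) * Real.cos θ : ℝ) : ℂ)) := by
  by_cases h : a = 0 ∧ b = 0
  · simp [h.1, h.2]
  · set w : ℂ := ⟨a, b⟩ with hw
    have hw0 : w ≠ 0 := fun h0 => h
      ⟨by simpa using congrArg Complex.re h0, by simpa using congrArg Complex.im h0⟩
    set R : ℝ := Real.sqrt (a^2+b^2) with hR
    have habs : ‖w‖ = R := by
      rw [Complex.norm_def, Complex.normSq_mk]; rw [hR]; ring_nf
    set φ : ℝ := Complex.arg w with hφ
    have hcos : R * Real.cos φ = a := by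
      rw [hφ, Complex.cos_arg hw0, habs]
      have : R ≠ 0 := by
        rw [← habs]; exact (norm_ne_zero_iff.mpr hw0)
      field_simp; rfl
    have hsin : R * Real.sin φ = b := by
      rw [hφ, Complex.sin_arg, habs]
      have : R ≠ 0 := by
        rw [← habs]; exact (norm_ne_zero_iff.mpr hw0)
      field_simp; rfl
    have heq : ∀ θ : ℝ, a * Real.cos θ + b * Real.sin θ = R * Real.cos (θ - φ) := by
      intro θ
      rw [Real.cos_sub, ← hcos, ← hsin]; ring
    calc ∫ θ in (0:ℝ)..(2*Real.pi),
            Complex.exp (Complex.I * ((a * Real.cos θ + b * Real.sin θ : ℝ) : ℂ))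
        = ∫ θ in (0:ℝ)..(2*Real.pi),
            Complex.exp (Complex.I * ((R * Real.cos (θ - φ) : ℝ) : ℂ)) := by
          simp_rw [heq]
      _ = ∫ θ in (0-φ:ℝ)..(2*Real.pi-φ),
            Complex.exp (Complex.I * ((R * Real.cos θ : ℝ) : ℂ)) := by
          rw [intervalIntegral.integral_comp_sub_right
            (fun θ => Complex.exp (Complex.I * ((R * Real.cos θ : ℝ) : ℂ))) φ]
      _ = ∫ θ in (0:ℝ)..(2*Real.pi),
            Complex.exp (Complex.I * ((R * Real.cos θ : ℝ) : ℂ)) := by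
          have hp : Function.Periodic
              (fun θ : ℝ => Complex.exp (Complex.I * ((R * Real.cos θ : ℝ) : ℂ)))
              (2*Real.pi) := fun x => by simp [Real.cos_add_two_pi]
          have h2 := hp.intervalIntegral_add_eq (0-φ) 0
          rw [show (2*Real.pi - φ) = 0 - φ + (2*Real.pi) by ring]
          simpa using h2

/-- Averaging the phase-corrected single-incidence responses over all incident
directions replaces each factor `J₀(k₀‖z − r_m‖)` by its square:
`(1/(2π)) ∫₀^{2π} e^{−i k₀ d(θ)·z} (Σ_m c_m e^{i k₀ d(θ)·r_m} J₀(k₀‖z − r_m‖)) dθ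
  = Σ_m c_m J₀(k₀‖z − r_m‖)²`. -/
theorem average_phaseCorrected_response_eq_sum_sq (k₀ : ℝ) (hk : 0 < k₀)
    (M : ℕ) (hM : 1 ≤ M) (r : Fin M → EuclideanSpace ℝ (Fin 2)) (c : Fin M → ℂ)
    (z : EuclideanSpace ℝ (Fin 2)) :
    (1 / (2 * Real.pi) : ℂ) *
        ∫ θ in (0 : ℝ)..(2 * Real.pi),
          Complex.exp (-(Complex.I *
              ((k₀ * (z 0 * Real.cos θ + z 1 * Real.sin θ) : ℝ) : ℂ))) *
            ∑ m, c m *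
              Complex.exp (Complex.I *
                ((k₀ * (r m 0 * Real.cos θ + r m 1 * Real.sin θ) : ℝ) : ℂ)) *
              J₀ (k₀ * ‖z - r m‖)
      = ∑ m, c m * (J₀ (k₀ * ‖z - r m‖)) ^ 2 := by
  -- rewrite integrand as a sum
  have hinteg : ∀ θ : ℝ,
      Complex.exp (-(Complex.I *
          ((k₀ * (z 0 * Real.cos θ + z 1 * Real.sin θ) : ℝ) : ℂ))) *
        ∑ m, c m *
          Complex.exp (Complex.I *
            ((k₀ * (r m 0 * Real.cos θ + r m 1 * Real.sin θ) : ℝ) : ℂ)) *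
          J₀ (k₀ * ‖z - r m‖)
      = ∑ m, c m * J₀ (k₀ * ‖z - r m‖) *
          Complex.exp (Complex.I *
            (((k₀ * (r m 0 - z 0)) * Real.cos θ + (k₀ * (r m 1 - z 1)) * Real.sin θ : ℝ) : ℂ)) := by
    intro θ
    rw [Finset.mul_sum]
    refine Finset.sum_congr rfl fun m _ => ?_
    rw [show Complex.exp (-(Complex.I *
          ((k₀ * (z 0 * Real.cos θ + z 1 * Real.sin θ) : ℝ) : ℂ))) *
        (c m * Complex.exp (Complex.I *
          ((k₀ * (r m 0 * Real.cos θ + r m 1 * Real.sin θ) : ℝ) : ℂ)) *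
          J₀ (k₀ * ‖z - r m‖))
      = c m * J₀ (k₀ * ‖z - r m‖) *
        (Complex.exp (Complex.I *
          ((k₀ * (r m 0 * Real.cos θ + r m 1 * Real.sin θ) : ℝ) : ℂ)) *
         Complex.exp (-(Complex.I *
          ((k₀ * (z 0 * Real.cos θ + z 1 * Real.sin θ) : ℝ) : ℂ)))) from by ring,
      ← Complex.exp_add]
    congr 2
    push_cast
    ring
  have hcont : ∀ (m : Fin M), Continuous (fun θ : ℝ =>
      c m * J₀ (k₀ * ‖z - r m‖) *
        Complex.exp (Complex.I *
          (((k₀ * (r m 0 - z 0)) * Real.cos θ + (k₀ * (r m 1 - z 1)) * Real.sin θ : ℝ) : ℂ))) := by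
    intro m
    fun_prop
  rw [intervalIntegral.integral_congr (g := fun θ => ∑ m, c m * J₀ (k₀ * ‖z - r m‖) *
        Complex.exp (Complex.I *
          (((k₀ * (r m 0 - z 0)) * Real.cos θ + (k₀ * (r m 1 - z 1)) * Real.sin θ : ℝ) : ℂ)))
      (fun θ _ => hinteg θ)]
  rw [intervalIntegral.integral_finset_sum (fun m _ => ((hcont m).intervalIntegrable _ _))]
  rw [Finset.mul_sum]
  refine Finset.sum_congr rfl fun m _ => ?_
  rw [intervalIntegral.integral_const_mul, key_integral]
  have hnorm : Real.sqrt ((k₀ * (r m 0 - z 0))^2 + (k₀ * (r m 1 - z 1))^2)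
      = k₀ * ‖z - r m‖ := by
    have h01 : ‖z - r m‖ = Real.sqrt ((z 0 - r m 0)^2 + (z 1 - r m 1)^2) := by
      have e0 : (z - r m) 0 = z 0 - r m 0 := rfl
      have e1 : (z - r m) 1 = z 1 - r m 1 := rfl
      rw [EuclideanSpace.norm_eq, Fin.sum_univ_two, e0, e1,
        Real.norm_eq_abs, Real.norm_eq_abs, sq_abs, sq_abs]
    have hsq : (k₀ * (r m 0 - z 0))^2 + (k₀ * (r m 1 - z 1))^2
        = k₀^2 * ((z 0 - r m 0)^2 + (z 1 - r m 1)^2) := by ring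
    rw [hsq, Real.sqrt_mul (sq_nonneg k₀), Real.sqrt_sq hk.le, h01]
  rw [hnorm]
  rw [show (J₀ (k₀ * ‖z - r m‖)) = (1 / (2 * Real.pi) : ℂ) *
    ∫ θ in (0 : ℝ)..(2 * Real.pi), Complex.exp (Complex.I * ((k₀ * ‖z - r m‖ * Real.cos θ : ℝ) : ℂ)) from rfl]
  ring
end

section
/- Let k₀ > 0, let M ≥ 1, let r₁, …, r_M ∈ ℝ² and c₁, …, c_M ∈ ℂ, and let z ∈ ℝ². For each integer L ≥ 1 set d_l := (cos(2πl/L), sin(2πl/L)) for l = 1, …, L. Then the quantities (1/L) Σ_{l=1}^{L} exp(−i k₀ d_l·z) · ( Σ_{m=1}^{M} c_m exp(i k₀ d_l·r_m) J₀(k₀ ‖z − r_m‖) ) converge, as L → ∞, to Σ_{m=1}^{M} c_m J₀(k₀ ‖z − r_m‖)². -/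
open MeasureTheory Real Filter intervalIntegral


lemma step_meas (L : ℕ) : Measurable (fun x : ℝ => 2 * π * ((⌈x * L / (2 * π)⌉ : ℤ) : ℝ) / L) := by
  apply Measurable.div_const
  apply Measurable.const_mul
  exact Measurable.comp (by measurability) (Int.measurable_ceil.comp ((measurable_id.mul_const _).div_const _))

lemma step_tendsto (x : ℝ) :
    Tendsto (fun L : ℕ => 2 * π * ((⌈x * L / (2 * π)⌉ : ℤ) : ℝ) / L) atTop (nhds x) := by
  have h2π : (0:ℝ) < 2 * π := by positivity
  apply tendsto_of_tendsto_of_tendsto_of_le_of_le' (g := fun _ : ℕ => x)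
    (h := fun L : ℕ => x + 2 * π / L) tendsto_const_nhds
    (by simpa using (tendsto_const_nhds (x := x)).add (tendsto_const_div_atTop_nhds_zero_nat (2 * π)))
  · filter_upwards [eventually_ge_atTop 1] with L hL
    have hL0 : (0:ℝ) < L := by exact_mod_cast hL
    have h1 : x * L ≤ ⌈x * L / (2 * π)⌉ * (2 * π) :=
      (div_le_iff₀ h2π).mp (Int.le_ceil (x * L / (2 * π)))
    rw [le_div_iff₀ hL0]
    nlinarith
  · filter_upwards [eventually_ge_atTop 1] with L hL
    have hL0 : (0:ℝ) < L := by exact_mod_cast hL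
    have h0 := Int.ceil_lt_add_one (x * L / (2 * π))
    have h3 : x * L / (2 * π) * (2 * π) = x * L := div_mul_cancel₀ _ h2π.ne'
    have h1 : (⌈x * L / (2 * π)⌉ : ℝ) * (2 * π) < x * L + 2 * π := by nlinarith
    have h2 : 2 * π / L * L = 2 * π := div_mul_cancel₀ _ hL0.ne'
    rw [div_le_iff₀ hL0]
    nlinarith

lemma riemann_sum_tendsto (f : ℝ → ℂ) (hf : Continuous f) (hb : ∀ x, ‖f x‖ ≤ 1) :
    Tendsto (fun L : ℕ => (1 / (L : ℝ) : ℂ) * ∑ l ∈ Finset.Icc 1 L, f (2 * π * l / L))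
      atTop (nhds ((1 / (2 * π) : ℂ) * ∫ θ in (0:ℝ)..(2 * π), f θ)) := by
  have h2π : (0:ℝ) < 2 * π := by positivity
  set s : ℕ → ℝ → ℝ := fun L x => 2 * π * ((⌈x * L / (2 * π)⌉ : ℤ) : ℝ) / L with hs
  have hmeas : ∀ L, Measurable (fun x => f (s L x)) := fun L =>
    hf.measurable.comp (step_meas L)
  have hInt : ∀ L (c d : ℝ), IntervalIntegrable (fun x => f (s L x)) volume c d := by
    intro L c d
    refine (_root_.intervalIntegrable_const (c := (1:ℝ))).mono_fun (hmeas L).aestronglyMeasurable ?_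
    filter_upwards with x
    simpa using hb (s L x)
  have key : ∀ L : ℕ, 1 ≤ L →
      (∫ θ in (0:ℝ)..(2*π), f (s L θ))
        = ((2 * π / L : ℝ) : ℂ) * ∑ l ∈ Finset.Icc 1 L, f (2 * π * l / L) := by
    intro L hL
    have hL0 : (0:ℝ) < L := by exact_mod_cast hL
    set a : ℕ → ℝ := fun i => 2 * π * i / L with ha
    have hpiece : ∀ i : ℕ, (∫ x in a i..a (i+1), f (s L x)) = ((2*π/L : ℝ):ℂ) • f (a (i+1)) := by
      intro i
      have hle : a i ≤ a (i+1) := by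
        simp only [ha]
        gcongr <;> omega
      rw [integral_of_le hle,
        setIntegral_congr_fun measurableSet_Ioc (g := fun _ => f (a (i+1)))
          (fun x hx => by
            have hx1 : a i < x := hx.1
            have hx2 : x ≤ a (i+1) := hx.2
            have hceil : ⌈x * L / (2 * π)⌉ = (i : ℤ) + 1 := by
              rw [Int.ceil_eq_iff]
              constructor
              · have h1 : 2 * π * i < x * L := by
                  have := (div_lt_iff₀ hL0).mp hx1
                  linarith
                rw [lt_div_iff₀ h2π]
                push_cast
                nlinarith
              · have h2 : x * L ≤ 2 * π * ((i:ℝ)+1) := by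
                  have := (le_div_iff₀ hL0).mp hx2
                  push_cast at this ⊢
                  nlinarith
                rw [div_le_iff₀ h2π]
                push_cast
                nlinarith
            show f (s L x) = f (a (i+1))
            simp only [hs, hceil, ha]
            push_cast
            ring_nf),
        setIntegral_const, Real.volume_real_Ioc]
      congr 1
      rw [max_eq_left (by linarith)]
      simp only [ha]
      rw [div_sub_div_same]
      congr 1
      push_cast
      ring
    have hsum := intervalIntegral.sum_integral_adjacent_intervals
      (a := a) (n := L) (μ := volume) (f := fun x => f (s L x)) (fun i _ => hInt L _ _)
    have ha0 : a 0 = 0 := by simp [ha]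
    have haL : a L = 2 * π := by
      simp only [ha]
      field_simp
    rw [ha0, haL] at hsum
    rw [← hsum]
    rw [Finset.sum_congr rfl (fun i _ => hpiece i)]
    rw [← Finset.Ico_add_one_right_eq_Icc, Finset.sum_Ico_eq_sum_range]
    rw [Finset.mul_sum]
    refine Finset.sum_congr rfl fun i _ => ?_
    rw [smul_eq_mul]
    congr 2
    simp only [ha]
    push_cast
    ring
  have hdct : Tendsto (fun L : ℕ => ∫ θ in (0:ℝ)..(2*π), f (s L θ)) atTop
      (nhds (∫ θ in (0:ℝ)..(2*π), f θ)) := by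
    apply intervalIntegral.tendsto_integral_filter_of_dominated_convergence (bound := fun _ => (1:ℝ))
    · filter_upwards with L using ((hmeas L).aestronglyMeasurable).restrict
    · filter_upwards with L
      filter_upwards with x _
      exact hb _
    · exact _root_.intervalIntegrable_const
    · filter_upwards with x _
      exact (hf.tendsto x).comp (step_tendsto x)
  have hmul := hdct.const_mul ((1/(2*π) : ℂ))
  apply hmul.congr'
  filter_upwards [eventually_ge_atTop 1] with L hL
  rw [key L hL, ← mul_assoc]
  congr 1
  have hLne : ((L:ℂ)) ≠ 0 := Nat.cast_ne_zero.mpr (Nat.one_le_iff_ne_zero.mp hL)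
  have hπ : (π : ℂ) ≠ 0 := by exact_mod_cast Real.pi_ne_zero
  push_cast
  field_simp

lemma integral_rotation (k a b : ℝ) :
    ((1 / (2 * π) : ℂ) * ∫ θ in (0:ℝ)..(2*π),
        Complex.exp (Complex.I * ((k * (a * Real.cos θ + b * Real.sin θ) : ℝ) : ℂ)))
      = J₀ (k * Real.sqrt (a^2 + b^2)) := by
  set w : ℂ := a + b * Complex.I with hw
  have hre : w.re = a := by simp [hw]
  have him : w.im = b := by simp [hw]
  have hab : ‖w‖ = Real.sqrt (a^2 + b^2) := by
    rw [Complex.norm_def, Complex.normSq_apply, hre, him]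
    ring_nf
  set ρ := Real.sqrt (a^2 + b^2) with hρ
  set φ := Complex.arg w with hφ
  have hacos : ρ * Real.cos φ = a := by rw [← hab, ← hre, hφ]; exact Complex.norm_mul_cos_arg w
  have hbsin : ρ * Real.sin φ = b := by rw [← hab, ← him, hφ]; exact Complex.norm_mul_sin_arg w
  have h1 : (∫ θ in (0:ℝ)..(2*π),
        Complex.exp (Complex.I * ((k * (a * Real.cos θ + b * Real.sin θ) : ℝ) : ℂ)))
      = ∫ θ in (0:ℝ)..(2*π), Complex.exp (Complex.I * ((k * ρ * Real.cos (θ - φ) : ℝ) : ℂ)) := by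
    refine intervalIntegral.integral_congr fun θ _ => ?_
    have : k * (a * Real.cos θ + b * Real.sin θ) = k * ρ * Real.cos (θ - φ) := by
      rw [← hacos, ← hbsin, Real.cos_sub]; ring
    rw [this]
  rw [J₀, h1]
  refine congrArg (fun u => (1 / (2 * π) : ℂ) * u) ?_
  have h2 : (∫ θ in (0:ℝ)..(2*π), Complex.exp (Complex.I * ((k * ρ * Real.cos (θ - φ) : ℝ) : ℂ)))
      = ∫ θ in (0:ℝ) - φ..(2*π) - φ, Complex.exp (Complex.I * ((k * ρ * Real.cos θ : ℝ) : ℂ)) :=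
    intervalIntegral.integral_comp_sub_right
      (fun θ => Complex.exp (Complex.I * ((k * ρ * Real.cos θ : ℝ) : ℂ))) φ
  rw [h2]
  have hper : Function.Periodic
      (fun θ : ℝ => Complex.exp (Complex.I * ((k * ρ * Real.cos θ : ℝ) : ℂ))) (2*π) := by
    intro θ; simp [Real.cos_add_two_pi]
  have h3 := hper.intervalIntegral_add_eq (0 - φ) 0
  rw [show (0:ℝ) - φ + 2*π = 2*π - φ by ring, zero_add] at h3
  exact h3

/-- With `L` equally spaced incident directions `d_l = (cos(2πl/L), sin(2πl/L))`, the
phase-corrected averages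
`(1/L) Σ_{l=1}^{L} e^{−i k₀ d_l·z} (Σ_m c_m e^{i k₀ d_l·r_m} J₀(k₀‖z − r_m‖))`
converge, as `L → ∞`, to `Σ_m c_m J₀(k₀‖z − r_m‖)²` (structure of the
alternative direct sampling indicator, Theorem 2 of the paper). -/
theorem tendsto_phaseCorrected_average_to_sum_sq (k₀ : ℝ) (hk : 0 < k₀)
    (M : ℕ) (hM : 1 ≤ M) (r : Fin M → EuclideanSpace ℝ (Fin 2)) (c : Fin M → ℂ)
    (z : EuclideanSpace ℝ (Fin 2)) :
    Filter.Tendsto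
      (fun L : ℕ =>
        (1 / (L : ℝ) : ℂ) *
          ∑ l ∈ Finset.Icc 1 L,
            Complex.exp (-(Complex.I *
                ((k₀ * (z 0 * Real.cos (2 * Real.pi * l / L)
                      + z 1 * Real.sin (2 * Real.pi * l / L)) : ℝ) : ℂ))) *
              ∑ m, c m *
                Complex.exp (Complex.I *
                  ((k₀ * (r m 0 * Real.cos (2 * Real.pi * l / L)
                        + r m 1 * Real.sin (2 * Real.pi * l / L)) : ℝ) : ℂ)) *
                J₀ (k₀ * ‖z - r m‖))
      Filter.atTop (nhds (∑ m, c m * (J₀ (k₀ * ‖z - r m‖)) ^ 2)) := by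
  have hnrm : ∀ m : Fin M, ‖z - r m‖ = Real.sqrt ((r m 0 - z 0)^2 + (r m 1 - z 1)^2) := by
    intro m
    rw [EuclideanSpace.norm_eq]
    congr 1
    rw [Fin.sum_univ_two]
    simp only [PiLp.sub_apply, Real.norm_eq_abs, sq_abs]
    ring
  have hnorm1 : ∀ t : ℝ, ‖Complex.exp (Complex.I * (t:ℂ))‖ ≤ 1 := by
    intro t
    rw [mul_comm, Complex.norm_exp_ofReal_mul_I]
  have hm : ∀ m : Fin M,
      Filter.Tendsto (fun L : ℕ => (1 / (L : ℝ) : ℂ) *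
          ∑ l ∈ Finset.Icc 1 L, Complex.exp (Complex.I *
            ((k₀ * ((r m 0 - z 0) * Real.cos (2 * π * l / L)
                  + (r m 1 - z 1) * Real.sin (2 * π * l / L)) : ℝ) : ℂ)))
        Filter.atTop (nhds (J₀ (k₀ * ‖z - r m‖))) := by
    intro m
    have h2 := riemann_sum_tendsto
      (fun θ : ℝ => Complex.exp (Complex.I *
        ((k₀ * ((r m 0 - z 0) * Real.cos θ + (r m 1 - z 1) * Real.sin θ) : ℝ) : ℂ)))
      (by fun_prop) (fun x => hnorm1 _)
    rw [integral_rotation k₀ (r m 0 - z 0) (r m 1 - z 1)] at h2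
    rw [hnrm m]
    exact h2
  have hsum := tendsto_finset_sum Finset.univ
    (fun (m : Fin M) (_ : m ∈ Finset.univ) => ((hm m).const_mul (c m * J₀ (k₀ * ‖z - r m‖))))
  have heq : (∑ m, (c m * J₀ (k₀ * ‖z - r m‖)) * J₀ (k₀ * ‖z - r m‖))
      = ∑ m, c m * (J₀ (k₀ * ‖z - r m‖)) ^ 2 :=
    Finset.sum_congr rfl fun m _ => by ring
  rw [← heq]
  apply hsum.congr
  intro L
  have hexp : ∀ x y : ℝ, Complex.exp (-(Complex.I * (x:ℂ))) * Complex.exp (Complex.I * (y:ℂ))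
      = Complex.exp (Complex.I * ((y - x : ℝ) : ℂ)) := by
    intro x y; rw [← Complex.exp_add]; congr 1; push_cast; ring
  calc ∑ m, (c m * J₀ (k₀ * ‖z - r m‖)) * ((1 / (L : ℝ) : ℂ) *
          ∑ l ∈ Finset.Icc 1 L, Complex.exp (Complex.I *
            ((k₀ * ((r m 0 - z 0) * Real.cos (2 * π * l / L)
                  + (r m 1 - z 1) * Real.sin (2 * π * l / L)) : ℝ) : ℂ)))
      = ∑ m, ∑ l ∈ Finset.Icc 1 L, (1 / (L : ℝ) : ℂ) *
          (Complex.exp (-(Complex.I *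
                ((k₀ * (z 0 * Real.cos (2 * Real.pi * l / L)
                      + z 1 * Real.sin (2 * Real.pi * l / L)) : ℝ) : ℂ))) *
            (c m * Complex.exp (Complex.I *
                  ((k₀ * (r m 0 * Real.cos (2 * Real.pi * l / L)
                        + r m 1 * Real.sin (2 * Real.pi * l / L)) : ℝ) : ℂ)) *
                J₀ (k₀ * ‖z - r m‖))) := by
        refine Finset.sum_congr rfl fun m _ => ?_
        rw [Finset.mul_sum, Finset.mul_sum]
        refine Finset.sum_congr rfl fun l _ => ?_
        rw [show (k₀ * ((r m 0 - z 0) * Real.cos (2 * π * l / L)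
                  + (r m 1 - z 1) * Real.sin (2 * π * l / L)) : ℝ)
            = (k₀ * (r m 0 * Real.cos (2 * Real.pi * l / L)
                        + r m 1 * Real.sin (2 * Real.pi * l / L))
              - k₀ * (z 0 * Real.cos (2 * Real.pi * l / L)
                      + z 1 * Real.sin (2 * Real.pi * l / L)) : ℝ) from by ring,
          ← hexp]
        ring
    _ = (1 / (L : ℝ) : ℂ) *
          ∑ l ∈ Finset.Icc 1 L,
            Complex.exp (-(Complex.I *
                ((k₀ * (z 0 * Real.cos (2 * Real.pi * l / L)
                      + z 1 * Real.sin (2 * Real.pi * l / L)) : ℝ) : ℂ))) *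
              ∑ m, c m *
                Complex.exp (Complex.I *
                  ((k₀ * (r m 0 * Real.cos (2 * Real.pi * l / L)
                        + r m 1 * Real.sin (2 * Real.pi * l / L)) : ℝ) : ℂ)) *
                J₀ (k₀ * ‖z - r m‖) := by
        rw [Finset.sum_comm, Finset.mul_sum]
        refine Finset.sum_congr rfl fun l _ => ?_
        rw [Finset.mul_sum, Finset.mul_sum]
end
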